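/- Let 𝒳 be a finite set of cardinality k > 1 and d > 1 finite. If P = β·Q′ + (1−β)·R′, where 0 ≤ β ≤ 1, Q′ is an exchangeable probability measure on 𝒳^d, and R′ is a probability measure on 𝒳^d that is not exchangeable and satisfies λ_ℰ(R′) = 0, then λ_ℰ(P) = β. -/

import Mathlib

open scoped BigOperators Classical

/-- A function `P : Ω → ℝ` on a finite sample space is a probability measure if it is
nonnegative and sums to one. -/
def IsProb {Ω : Type*} [Fintype Ω] (P : Ω → ℝ) : Prop :=
  (∀ ω, 0 ≤ P ω) ∧ ∑ ω, P ω = 1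

/-- A probability measure on `𝒳^ι` is exchangeable if it is invariant under all
coordinate permutations. -/
def Exchangeable {ι 𝒳 : Type*} (Q : (ι → 𝒳) → ℝ) : Prop :=
  ∀ σ : Equiv.Perm ι, ∀ x : ι → 𝒳, Q (x ∘ σ) = Q x

/-- The exchangeable weight `λ_ℰ(P)`: the supremum of `λ` such that `P ≥ λ·Q` pointwise
for some exchangeable probability measure `Q`. -/
noncomputable def exchWeight {ι 𝒳 : Type*} [Fintype ι] [Fintype 𝒳]
    (P : (ι → 𝒳) → ℝ) : ℝ :=
  sSup {l : ℝ | ∃ Q : (ι → 𝒳) → ℝ, IsProb Q ∧ Exchangeable Q ∧ ∀ x, l * Q x ≤ P x}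

/-- The permutation-equivalence class `[x]` of `x`, as a set. -/
def permSet {ι 𝒳 : Type*} (x : ι → 𝒳) : Set (ι → 𝒳) :=
  {y | ∃ σ : Equiv.Perm ι, y = x ∘ σ}

/-- The permutation-equivalence class `[x]` of `x`, as a finset. -/
noncomputable def permClass {ι 𝒳 : Type*} [Fintype ι] (x : ι → 𝒳) :
    Finset (ι → 𝒳) :=
  Finset.univ.image (fun σ : Equiv.Perm ι => x ∘ σ)


lemma isProb_irrel {Ω : Type*} (F G : Fintype Ω) (P : Ω → ℝ) :
    @IsProb Ω F P → @IsProb Ω G P := by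
  cases Subsingleton.elim F G; exact id

theorem stmt8_aux {ι 𝒳 : Type*} [Fintype ι] [Fintype 𝒳]
    (β : ℝ) (hβ0 : 0 ≤ β) (hβ1 : β ≤ 1)
    (Q' R' P : (ι → 𝒳) → ℝ)
    (hQ' : IsProb Q') (hQ'exch : Exchangeable Q')
    (hR' : IsProb R') (hR'w : exchWeight R' = 0)
    (hPdef : ∀ x, P x = β * Q' x + (1 - β) * R' x) :
    exchWeight P = β := by
  have hRnn := hR'.1
  have hQnn := hQ'.1
  have hPsum : ∑ x, P x = 1 := by
    have : ∑ x, P x = ∑ x, (β * Q' x + (1 - β) * R' x) := by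
      apply Finset.sum_congr rfl; intro x _; rw [hPdef x]
    rw [this, Finset.sum_add_distrib, ← Finset.mul_sum, ← Finset.mul_sum,
      hQ'.2, hR'.2]
    ring
  set S : Set ℝ :=
    {l : ℝ | ∃ Q : (ι → 𝒳) → ℝ, IsProb Q ∧ Exchangeable Q ∧ ∀ x, l * Q x ≤ P x}
    with hS
  have hmem : β ∈ S := by
    refine ⟨Q', hQ', hQ'exch, fun x => ?_⟩
    rw [hPdef x]
    nlinarith [hRnn x, hQnn x]
  have hub : ∀ l ∈ S, l ≤ β := by
    rintro l ⟨Q, hQ, hQexch, hlQ⟩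
    have hl1 : l ≤ 1 := by
      have := Finset.sum_le_sum (fun x (_ : x ∈ Finset.univ) => hlQ x)
      rwa [← Finset.mul_sum, hQ.2, mul_one, hPsum] at this
    by_contra h
    push_neg at h
    have hβlt1 : β < 1 := lt_of_lt_of_le h hl1
    set M : (ι → 𝒳) → ℝ := fun x => max (l * Q x - β * Q' x) 0 with hM
    set s : ℝ := ∑ x, M x with hs
    have hslb : l - β ≤ s := by
      have : ∑ x, (l * Q x - β * Q' x) ≤ s :=
        Finset.sum_le_sum (fun x _ => le_max_left _ _)
      rwa [Finset.sum_sub_distrib, ← Finset.mul_sum, ← Finset.mul_sum,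
        hQ.2, hQ'.2, mul_one, mul_one] at this
    have hspos : 0 < s := lt_of_lt_of_le (by linarith) hslb
    have hQ''prob : IsProb (fun x => M x / s) := by
      constructor
      · intro x; exact div_nonneg (le_max_right _ _) hspos.le
      · rw [← Finset.sum_div, ← hs, div_self hspos.ne']
    have hQ''exch : Exchangeable (fun x => M x / s) := by
      intro σ x
      simp only [hM, Function.comp, hQexch σ x, hQ'exch σ x]
    have hMle : ∀ x, M x ≤ (1 - β) * R' x := by
      intro x
      apply max_le
      · have := hlQ x; rw [hPdef x] at this; linarith
      · exact mul_nonneg (by linarith) (hRnn x)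
    have h1β : (1 : ℝ) - β ≠ 0 := by linarith
    have hle : s / (1 - β) ≤ exchWeight R' := by
      rw [exchWeight]
      apply le_csSup
      · refine ⟨1, ?_⟩
        rintro l ⟨Q, hQ, _, hlQ⟩
        have := Finset.sum_le_sum (fun x (_ : x ∈ Finset.univ) => hlQ x)
        rwa [← Finset.mul_sum, hQ.2, mul_one, hR'.2] at this
      · refine ⟨fun x => M x / s, hQ''prob, hQ''exch, fun x => ?_⟩
        have h1 : s / (1 - β) * (M x / s) = M x / (1 - β) := by
          field_simp [hspos.ne']
        rw [h1, div_le_iff₀ (by linarith)]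
        have := hMle x; linarith
    rw [hR'w] at hle
    have : 0 < s / (1 - β) := div_pos hspos (by linarith)
    linarith
  exact le_antisymm (csSup_le ⟨β, hmem⟩ hub) (le_csSup ⟨β, hub⟩ hmem)


/-- Corollary: if `P = β·Q′ + (1−β)·R′` with `Q′` exchangeable, `R′` not exchangeable and
`λ_ℰ(R′) = 0`, then `λ_ℰ(P) = β`. -/
theorem stmt8 {𝒳 : Type*} [Fintype 𝒳] (hk : 1 < Fintype.card 𝒳)
    {d : ℕ} (hd : 1 < d)
    (β : ℝ) (hβ0 : 0 ≤ β) (hβ1 : β ≤ 1)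
    (Q' R' P : (Fin d → 𝒳) → ℝ)
    (hQ' : IsProb Q') (hQ'exch : Exchangeable Q')
    (hR' : IsProb R') (hR'nexch : ¬ Exchangeable R') (hR'w : exchWeight R' = 0)
    (hPdef : ∀ x, P x = β * Q' x + (1 - β) * R' x) :
    exchWeight P = β := by
  exact stmt8_aux β hβ0 hβ1 Q' R' P (isProb_irrel _ _ _ hQ') hQ'exch
    (isProb_irrel _ _ _ hR') hR'w hPdef
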